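/- For every nonnegative integer m, the identity ∑_{s=0}^{m} C(2s,s)·C(s,m−s)·((−1)^s/(s+1))·H^{(2)}_s = (2·(−1)^m/(m+1))·∑_{s=0}^{m} H^{(2)}_s holds. -/

import Mathlib

/-- The `n`-th generalized harmonic number of order 2, `H^{(2)}_n = ∑_{k=1}^n 1/k^2`. -/
def H2 (n : ℕ) : ℚ := ∑ k ∈ Finset.Icc 1 n, 1 / (k : ℚ) ^ 2

/-! ### Auxiliary definitions -/

/-- The central binomial coefficient, as a rational number. -/
def cb (s : ℕ) : ℚ := ((2*s).choose s : ℚ)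

/-- The hypergeometric certificate term. -/
def Wq (m s : ℕ) : ℚ :=
  if s ≤ m+1 then (2*(s:ℚ)-m-1) * cb s * (s.choose (m+1-s) : ℚ) * (-1)^s else 0

def gq (m s : ℕ) : ℚ := -Wq m s / (((m:ℚ)+1)*((m:ℚ)+2))

/-- The summand of the main sum (without the harmonic factor), extended by zero. -/
def hq (m s : ℕ) : ℚ :=
  if s ≤ m then cb s * (s.choose (m-s) : ℚ) * ((-1)^s / ((s:ℚ)+1)) else 0

def Kk (m : ℕ) : ℚ := ∑ s ∈ Finset.range (m+2), Wq m (s+1) / ((s:ℚ)+1)^2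

/-- The `n`-th harmonic number. -/
def HH1 (n : ℕ) : ℚ := ∑ k ∈ Finset.Icc 1 n, 1/(k:ℚ)

def Sq (m : ℕ) : ℚ := ∑ s ∈ Finset.range (m+1), hq m s * H2 s

def Aq (m : ℕ) : ℚ := ∑ s ∈ Finset.range (m+1), H2 s

/-! ### Basic binomial lemmas -/

lemma cb_succ (s : ℕ) : ((s:ℚ)+1) * cb (s+1) = 2*(2*(s:ℚ)+1) * cb s := by
  have h2 : ((s+1) * Nat.centralBinom (s+1) : ℕ) = (2 * (2*s+1) * Nat.centralBinom s : ℕ) :=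
    Nat.succ_mul_centralBinom_succ s
  have h3 := congrArg (Nat.cast (R := ℚ)) h2
  unfold Nat.centralBinom at h3
  unfold cb
  push_cast at h3 ⊢
  linarith

lemma choose_row (s k : ℕ) : ((k:ℚ)+1) * (s.choose (k+1) : ℚ) = ((s:ℚ)-k) * (s.choose k : ℚ) := by
  have h := Nat.add_one_mul_choose_eq s k
  rw [Nat.choose_succ_succ] at h
  have h3 := congrArg (Nat.cast (R := ℚ)) h
  push_cast at h3
  linear_combination -h3

lemma choose_col (s k : ℕ) : ((s:ℚ)+1-k) * (((s+1).choose k : ℕ) : ℚ) = ((s:ℚ)+1) * (s.choose k : ℚ) := by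
  cases k with
  | zero => simp
  | succ k =>
    have pc := congrArg (Nat.cast (R := ℚ)) (Nat.choose_succ_succ s k)
    push_cast at pc ⊢
    linear_combination ((s:ℚ)-k) * pc - choose_row s k

/-! ### The two key polynomial identities (telescoping certificates) -/

lemma key1 (s k : ℕ) :
    ((s:ℚ)+1)*((s:ℚ)-k-1)*cb s*(s.choose (k+1) : ℚ)
      + ((s:ℚ)+1)*((s:ℚ)-k+1)*cb (s+1)*(((s+1).choose k : ℕ) : ℚ)
    = ((s:ℚ)+k+1)*((s:ℚ)+k+2)*cb s*((s.choose k : ℚ) + (s.choose (k+1) : ℚ)) := by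
  linear_combination (((s:ℚ)-(k:ℚ)+1)*(((s+1).choose k : ℕ) : ℚ)) * cb_succ s
    + (2*(2*(s:ℚ)+1)*cb s) * choose_col s k - (3*(s:ℚ)+(k:ℚ)+3)*cb s * choose_row s k

lemma key2 (s k : ℕ) :
    ((s:ℚ)+k+2)*(((s:ℚ)+k+1)*((s:ℚ)-k)*cb s*(s.choose k : ℚ)
      + (2*(s:ℚ)+2*(k:ℚ)+3)*((s:ℚ)-(k:ℚ)-1)*cb s*(s.choose (k+1) : ℚ)
      + ((s:ℚ)+k+2)*((s:ℚ)-(k:ℚ)-2)*cb s*(s.choose (k+2) : ℚ))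
    = (s:ℚ)^2*(((s:ℚ)-k)*cb (s+1)*(((s+1).choose (k+1) : ℕ) : ℚ)
      + ((s:ℚ)-(k:ℚ)-2)*cb s*(s.choose (k+2) : ℚ)) := by
  have col := choose_col s (k+1)
  have row2 := choose_row s (k+1)
  push_cast at col row2
  linear_combination (-(s:ℚ)^2*(s.choose (k+1) : ℚ)) * cb_succ s
    + (-(s:ℚ)^2*cb (s+1)) * col
    + (-((s:ℚ)+k+2)*((s:ℚ)+k+1)*cb s) * choose_row s k
    + ((2*(s:ℚ)+(k:ℚ)+2)*((s:ℚ)-(k:ℚ)-2)*cb s) * row2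

/-! ### Pointwise telescoping identities -/

lemma star (m s : ℕ) : gq m (s+1) - gq m s = hq m s + hq (m+1) s := by
  rcases Nat.lt_or_ge m s with hms | hms
  · rcases Nat.lt_or_ge (m+1) s with hms2 | hms2
    · simp only [gq, Wq, hq, if_neg (by omega : ¬ s+1 ≤ m+1), if_neg (by omega : ¬ s ≤ m+1),
        if_neg (by omega : ¬ s ≤ m), if_neg (by omega : ¬ s ≤ m+1)]
      norm_num
    · have hs : s = m + 1 := by omega
      subst hs
      simp only [gq, Wq, hq, if_neg (by omega : ¬ m+1+1 ≤ m+1), if_pos (le_refl (m+1)),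
        if_neg (by omega : ¬ m+1 ≤ m), if_pos (le_refl (m+1)),
        (by omega : m+1-(m+1) = 0), Nat.choose_zero_right]
      have hm1 : ((m:ℚ)+1) ≠ 0 := by positivity
      have hm2 : ((m:ℚ)+2) ≠ 0 := by positivity
      push_cast
      field_simp
      ring
  · obtain ⟨k, rfl⟩ : ∃ k, m = s + k := ⟨m - s, by omega⟩
    simp only [gq, Wq, hq, if_pos (by omega : s+1 ≤ s+k+1), if_pos (by omega : s ≤ s+k+1),
      if_pos (by omega : s ≤ s+k), if_pos (by omega : s ≤ s+k+1),
      (by omega : s+k+1-(s+1) = k), (by omega : s+k+1-s = k+1), (by omega : s+k-s = k),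
      (by omega : s+k+1+1-s = k+1+1)]
    have hs1 : ((s:ℚ)+1) ≠ 0 := by positivity
    have hm1 : ((s:ℚ)+(k:ℚ)+1) ≠ 0 := by positivity
    have hm2 : ((s:ℚ)+(k:ℚ)+2) ≠ 0 := by positivity
    push_cast
    rw [pow_succ]
    field_simp
    linear_combination key1 s k

lemma starstar (m s : ℕ) :
    ((m:ℚ)+3) * (((m:ℚ)+2) * Wq m s + (2*(m:ℚ)+5) * Wq (m+1) s + ((m:ℚ)+3) * Wq (m+2) s)
    = -(s:ℚ)^2 * (Wq (m+2) (s+1) - Wq (m+2) s) := by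
  rcases Nat.lt_or_ge (m+1) s with hms | hms
  · rcases Nat.lt_or_ge (m+3) s with h4 | h4
    · simp only [Wq, if_neg (by omega : ¬ s ≤ m+1), if_neg (by omega : ¬ s ≤ m+1+1),
        if_neg (by omega : ¬ s ≤ m+2+1), if_neg (by omega : ¬ s+1 ≤ m+2+1)]
      ring
    · rcases Nat.lt_or_ge (m+2) s with h3 | h3
      · have hs : s = m+3 := by omega
        subst hs
        simp only [Wq, if_neg (by omega : ¬ m+3 ≤ m+1), if_neg (by omega : ¬ m+3 ≤ m+1+1),
          if_pos (by omega : m+3 ≤ m+2+1), if_neg (by omega : ¬ m+3+1 ≤ m+2+1),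
          (by omega : m+2+1-(m+3) = 0), Nat.choose_zero_right]
        push_cast
        ring
      · have hs : s = m+2 := by omega
        subst hs
        simp only [Wq, if_neg (by omega : ¬ m+2 ≤ m+1), if_pos (by omega : m+2 ≤ m+1+1),
          if_pos (by omega : m+2 ≤ m+2+1), if_pos (by omega : m+2+1 ≤ m+2+1),
          (by omega : m+1+1-(m+2) = 0), (by omega : m+2+1-(m+2) = 1),
          (by omega : m+2+1-(m+2+1) = 0), Nat.choose_zero_right, Nat.choose_one_right]
        have h := cb_succ (m+2)
        push_cast at h ⊢
        rw [pow_succ, pow_succ, pow_succ]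
        linear_combination (-((m:ℚ)+2)^2*(-1)^m) * h
  · obtain ⟨k, hk⟩ : ∃ k, m + 1 = s + k := ⟨m+1-s, by omega⟩
    have hkq : (m:ℚ) = (s:ℚ)+(k:ℚ)-1 := by
      have := congrArg (Nat.cast (R := ℚ)) hk
      push_cast at this
      linarith
    simp only [Wq, if_pos (by omega : s ≤ m+1), if_pos (by omega : s ≤ m+1+1),
      if_pos (by omega : s ≤ m+2+1), if_pos (by omega : s+1 ≤ m+2+1),
      (by omega : m+1-s = k), (by omega : m+1+1-s = k+1), (by omega : m+2+1-s = k+2),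
      (by omega : m+2+1-(s+1) = k+1)]
    push_cast
    rw [hkq, pow_succ]
    linear_combination ((-1:ℚ)^s) * key2 s k

/-! ### The sum `Kk` -/

lemma Wq_zero (m s : ℕ) (h : m+2 ≤ s) : Wq m s = 0 := by
  rw [Wq, if_neg (by omega)]

lemma Kk_ext (m N : ℕ) (h : m+2 ≤ N) :
    Kk m = ∑ s ∈ Finset.range N, Wq m (s+1) / ((s:ℚ)+1)^2 := by
  rw [Kk]
  apply Finset.sum_subset
  · exact Finset.range_subset_range.2 (by omega)
  · intro s _ hs
    rw [Wq_zero m (s+1) (by simp at hs; omega)]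
    simp

lemma HH1_succ (n : ℕ) : HH1 (n+1) = HH1 n + 1/((n:ℚ)+1) := by
  rw [HH1, HH1, Finset.sum_Icc_succ_top (by omega : 1 ≤ n+1)]
  push_cast
  ring

lemma Krec (m : ℕ) :
    ((m:ℚ)+2)*Kk m + (2*(m:ℚ)+5)*Kk (m+1) + ((m:ℚ)+3)*Kk (m+2) = 0 := by
  have hm3 : ((m:ℚ)+3) ≠ 0 := by positivity
  rw [Kk_ext m (m+4) (by omega), Kk_ext (m+1) (m+4) (by omega), Kk_ext (m+2) (m+4) (by omega)]
  rw [Finset.mul_sum, Finset.mul_sum, Finset.mul_sum, ← Finset.sum_add_distrib,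
    ← Finset.sum_add_distrib]
  have key : ∀ s ∈ Finset.range (m+4),
      ((m:ℚ)+2) * (Wq m (s+1) / ((s:ℚ)+1)^2) + (2*(m:ℚ)+5) * (Wq (m+1) (s+1) / ((s:ℚ)+1)^2)
        + ((m:ℚ)+3) * (Wq (m+2) (s+1) / ((s:ℚ)+1)^2)
      = (-(1/((m:ℚ)+3))) * (Wq (m+2) (s+1+1) - Wq (m+2) (s+1)) := by
    intro s _
    have h := starstar m (s+1)
    have hs1 : ((s:ℚ)+1) ≠ 0 := by positivity
    push_cast at h
    field_simp
    linear_combination h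
  rw [Finset.sum_congr rfl key, ← Finset.mul_sum,
    Finset.sum_range_sub (fun s => Wq (m+2) (s+1)) (m+4)]
  have h1 : Wq (m+2) (m+4+1) = 0 := Wq_zero _ _ (by omega)
  have h2 : Wq (m+2) (0+1) = 0 := by
    rw [Wq, if_pos (by omega)]
    rw [(by omega : m+2+1-1 = m+2), Nat.choose_eq_zero_of_lt (by omega)]
    simp
  rw [h1, h2]
  ring

lemma Kk_eq (m : ℕ) : Kk m = 2*(-1:ℚ)^(m+1) * HH1 (m+1) := by
  induction m using Nat.strong_induction_on with
  | _ m ih =>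
    match m with
    | 0 =>
      have e1 : HH1 1 = 1 := by norm_num [HH1]
      norm_num [Kk, Wq, cb, Finset.sum_range_succ, Nat.choose, e1]
    | 1 =>
      have e1 : HH1 1 = 1 := by norm_num [HH1]
      have e2 : HH1 2 = 3/2 := by
        rw [show (2:ℕ) = 1+1 from rfl, HH1_succ]
        rw [e1]; norm_num
      norm_num [Kk, Wq, cb, Finset.sum_range_succ, Nat.choose, e2]
    | (n+2) =>
      have h0 := ih n (by omega)
      have h1 := ih (n+1) (by omega)
      have hr := Krec n
      rw [h0, h1] at hr
      have hn3 : ((n:ℚ)+3) ≠ 0 := by positivity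
      simp only [show n+1+1 = n+2 from rfl, show n+2+1 = n+3 from rfl] at hr ⊢
      have e2 := HH1_succ (n+1)
      have e3 := HH1_succ (n+2)
      simp only [show n+1+1 = n+2 from rfl, show n+2+1 = n+3 from rfl] at e2 e3
      rw [e2] at hr
      rw [e3, e2]
      push_cast at hr ⊢
      rw [pow_succ, pow_succ, pow_succ] at hr ⊢
      have hn2 : ((n:ℚ)+2) ≠ 0 := by positivity
      have hn1 : ((n:ℚ)+1) ≠ 0 := by positivity
      field_simp at hr ⊢
      linear_combination hr

/-! ### The sum `Sq` and its recurrence -/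

lemma H2_succ (n : ℕ) : H2 (n+1) = H2 n + 1/((n:ℚ)+1)^2 := by
  rw [H2, H2, Finset.sum_Icc_succ_top (by omega : 1 ≤ n+1)]
  push_cast
  ring

lemma H2_zero : H2 0 = 0 := by simp [H2]

lemma Srec (m : ℕ) : Sq m + Sq (m+1) = Kk m / (((m:ℚ)+1)*((m:ℚ)+2)) := by
  have hq_top : hq m (m+1) = 0 := by rw [hq, if_neg (by omega)]
  have e1 : ∑ s ∈ Finset.range (m+2), hq m s * H2 s = Sq m := by
    rw [Finset.sum_range_succ, hq_top, zero_mul, add_zero]; rfl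
  have step1 : Sq m + Sq (m+1) = ∑ s ∈ Finset.range (m+2), (hq m s + hq (m+1) s) * H2 s := by
    rw [← e1, Sq, ← Finset.sum_add_distrib]
    exact Finset.sum_congr rfl (fun s _ => by ring)
  rw [step1, Finset.sum_congr rfl (fun s _ => by rw [← star m s])]
  have step2 : ∀ s ∈ Finset.range (m+2), (gq m (s+1) - gq m s) * H2 s
      = (gq m (s+1) * H2 (s+1) - gq m s * H2 s) - gq m (s+1) * (1/((s:ℚ)+1)^2) := by
    intro s _
    rw [H2_succ]
    ring
  rw [Finset.sum_congr rfl step2, Finset.sum_sub_distrib,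
    Finset.sum_range_sub (fun s => gq m s * H2 s) (m+2)]
  have g_top : gq m (m+2) = 0 := by rw [gq, Wq_zero m (m+2) (by omega)]; simp
  rw [g_top, H2_zero]
  simp only [zero_mul, mul_zero, zero_sub, sub_zero, neg_zero]
  have hm1 : ((m:ℚ)+1) ≠ 0 := by positivity
  have hm2 : ((m:ℚ)+2) ≠ 0 := by positivity
  rw [Kk, Finset.sum_div]
  rw [← Finset.sum_neg_distrib]
  apply Finset.sum_congr
  · norm_num
  · intro s _
    have hs1 : ((s:ℚ)+1) ≠ 0 := by positivity
    rw [gq]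
    field_simp

/-! ### Putting everything together -/

lemma Aq_eq (m : ℕ) : Aq m = ((m:ℚ)+1) * H2 (m+1) - HH1 (m+1) := by
  induction m with
  | zero =>
    rw [Aq, H2_succ 0, HH1_succ 0]
    simp [H2_zero, HH1]
  | succ n ih =>
    rw [Aq, Finset.sum_range_succ]
    have : (∑ s ∈ Finset.range (n+1), H2 s) = Aq n := rfl
    rw [this, ih, H2_succ (n+1), HH1_succ (n+1)]
    have h2 : ((n:ℚ)+2) ≠ 0 := by positivity
    push_cast
    field_simp
    ring

lemma Sq_eq (m : ℕ) : Sq m = 2*(-1:ℚ)^m/((m:ℚ)+1) * Aq m := by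
  induction m with
  | zero =>
    rw [Sq, Aq]
    simp [H2_zero]
  | succ n ih =>
    have hr := Srec n
    rw [ih, Kk_eq n] at hr
    have h1 : ((n:ℚ)+1) ≠ 0 := by positivity
    have h2 : ((n:ℚ)+2) ≠ 0 := by positivity
    have hA : Aq (n+1) = Aq n + H2 (n+1) := by
      rw [Aq, Finset.sum_range_succ]; rfl
    have hAe := Aq_eq n
    rw [hA]
    push_cast at hr ⊢
    rw [pow_succ] at hr ⊢
    have : Sq (n+1) = 2*(-1:ℚ)^(n+1)*HH1 (n+1)/(((n:ℚ)+1)*((n:ℚ)+2)) - 2*(-1:ℚ)^n/((n:ℚ)+1)*Aq n := by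
      rw [pow_succ]
      linarith
    rw [this, pow_succ]
    field_simp
    linear_combination (-((n:ℚ)+2)) * hAe

theorem sum_centralBinom_H2 (m : ℕ) :
    ∑ s ∈ Finset.range (m + 1),
        ((2 * s).choose s : ℚ) * (s.choose (m - s) : ℚ) * ((-1) ^ s / (s + 1)) * H2 s
      = 2 * (-1 : ℚ) ^ m / (m + 1) * ∑ s ∈ Finset.range (m + 1), H2 s := by
  have e : ∑ s ∈ Finset.range (m + 1),
      ((2 * s).choose s : ℚ) * (s.choose (m - s) : ℚ) * ((-1) ^ s / (s + 1)) * H2 s = Sq m := by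
    apply Finset.sum_congr rfl
    intro s hs
    have hsm : s ≤ m := by simp at hs; omega
    rw [hq, if_pos hsm, cb]
  rw [e, Sq_eq m]
  rw [Aq]
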